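/- Let $\alpha\in(0,1)$ and for $\delta>0$ define $\varphi_\delta(t)=\delta^{-1}\mathbf 1_{[0,\delta]}(t)$. Then there exists a constant $C>0$ (depending only on $\alpha$) such that for all $t>0$ and all $s,s'\in[0,t]$ with $s\ne s'$, $\sup_{\delta,\delta'>0}\int_0^t\int_0^t \varphi_\delta(t-s-r)\,\varphi_{\delta'}(t-s'-r')\,|r-r'|^{-\alpha}\,dr\,dr' \le C|s-s'|^{-\alpha}$. -/

import Mathlib

open MeasureTheory Set
open scoped ENNReal

namespace Stmt0Aux

variable {α : ℝ}

/-- Basic integral: `∫⁻ u in Ioc 0 m, u^(-α) = m^(1-α)/(1-α)`. -/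
lemma baseInt (h0 : 0 < α) (h1 : α < 1) {m : ℝ} (hm : 0 ≤ m) :
    ∫⁻ u in Ioc (0:ℝ) m, ENNReal.ofReal (u ^ (-α)) = ENNReal.ofReal (m ^ (1-α) / (1-α)) := by
  have hr : (-1:ℝ) < -α := by linarith
  have hint : IntegrableOn (fun u : ℝ => u ^ (-α)) (Ioc 0 m) := by
    have := intervalIntegral.intervalIntegrable_rpow' (a := 0) (b := m) hr
    rwa [intervalIntegrable_iff_integrableOn_Ioc_of_le hm] at this
  have hnn : 0 ≤ᵐ[volume.restrict (Ioc (0:ℝ) m)] fun u : ℝ => u ^ (-α) := by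
    filter_upwards [ae_restrict_mem measurableSet_Ioc] with u hu
    exact Real.rpow_nonneg hu.1.le _
  rw [← ofReal_integral_eq_lintegral_ofReal hint hnn]
  congr 1
  rw [← intervalIntegral.integral_of_le hm, integral_rpow (Or.inl hr)]
  rw [Real.zero_rpow (by linarith : -α + 1 ≠ 0)]
  norm_num
  ring_nf

/-- Shifted one-sided bound, right of the singularity. -/
lemma shiftRight (h0 : 0 < α) (h1 : α < 1) {c e m : ℝ} (hce : c ≤ e) (hm : 0 ≤ m) :
    ∫⁻ x in Ioc e (e+m), ENNReal.ofReal ((x - c) ^ (-α))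
      ≤ ENNReal.ofReal (m ^ (1-α) / (1-α)) := by
  have step1 : ∫⁻ x in Ioc e (e+m), ENNReal.ofReal ((x - c) ^ (-α))
      ≤ ∫⁻ x in Ioc e (e+m), ENNReal.ofReal ((x - e) ^ (-α)) := by
    refine setLIntegral_mono (by fun_prop) (fun x hx => ?_)
    refine ENNReal.ofReal_le_ofReal ?_
    exact Real.rpow_le_rpow_of_nonpos (by linarith [hx.1]) (by linarith) (by linarith)
  refine step1.trans ?_
  have hint : IntegrableOn (fun x : ℝ => (x - e) ^ (-α)) (Ioc e (e+m)) := by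
    have hr : (-1:ℝ) < -α := by linarith
    have := (intervalIntegral.intervalIntegrable_rpow' (a := 0) (b := m) hr).comp_sub_right e
    simp only [zero_add] at this
    rw [intervalIntegrable_iff_integrableOn_Ioc_of_le (by linarith)] at this
    rwa [add_comm m e] at this
  have hnn : 0 ≤ᵐ[volume.restrict (Ioc e (e+m))] fun x : ℝ => (x - e) ^ (-α) := by
    filter_upwards [ae_restrict_mem measurableSet_Ioc] with x hx
    exact Real.rpow_nonneg (by linarith [hx.1]) _
  rw [← ofReal_integral_eq_lintegral_ofReal hint hnn]
  refine ENNReal.ofReal_le_ofReal ?_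
  have : ∫ x in Ioc e (e+m), (x - e) ^ (-α) = ∫ x in e..(e+m), (x - e) ^ (-α) :=
    (intervalIntegral.integral_of_le (by linarith)).symm
  rw [this, intervalIntegral.integral_comp_sub_right (fun u => u ^ (-α)) e]
  simp only [sub_self, add_sub_cancel_left]
  rw [integral_rpow (Or.inl (by linarith : (-1:ℝ) < -α))]
  rw [Real.zero_rpow (by linarith : -α + 1 ≠ 0)]
  have : m ^ (-α + 1) = m ^ (1 - α) := by ring_nf
  rw [sub_zero, this]
  gcongr <;> linarith

/-- Shifted one-sided bound, left of the singularity. -/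
lemma shiftLeft (h0 : 0 < α) (h1 : α < 1) {c e m : ℝ} (hce : e ≤ c) (hm : 0 ≤ m) :
    ∫⁻ x in Ioc (e-m) e, ENNReal.ofReal ((c - x) ^ (-α))
      ≤ ENNReal.ofReal (m ^ (1-α) / (1-α)) := by
  rw [← setLIntegral_congr (Ioo_ae_eq_Ioc (a := e - m) (b := e))]
  have step1 : ∫⁻ x in Ioo (e-m) e, ENNReal.ofReal ((c - x) ^ (-α))
      ≤ ∫⁻ x in Ioo (e-m) e, ENNReal.ofReal ((e - x) ^ (-α)) := by
    refine setLIntegral_mono (by fun_prop) (fun x hx => ?_)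
    refine ENNReal.ofReal_le_ofReal ?_
    exact Real.rpow_le_rpow_of_nonpos (by linarith [hx.2]) (by linarith) (by linarith)
  refine step1.trans ?_
  rw [setLIntegral_congr (Ioo_ae_eq_Ioc (a := e - m) (b := e))]
  have hint : IntegrableOn (fun x : ℝ => (e - x) ^ (-α)) (Ioc (e-m) e) := by
    have hr : (-1:ℝ) < -α := by linarith
    have := (intervalIntegral.intervalIntegrable_rpow' (a := 0) (b := m) hr).comp_sub_left e
    simp only [sub_zero] at this
    have h2 := this.symm
    rwa [intervalIntegrable_iff_integrableOn_Ioc_of_le (by linarith)] at h2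
  have hnn : 0 ≤ᵐ[volume.restrict (Ioc (e-m) e)] fun x : ℝ => (e - x) ^ (-α) := by
    filter_upwards [ae_restrict_mem measurableSet_Ioc] with x hx
    exact Real.rpow_nonneg (by linarith [hx.2]) _
  rw [← ofReal_integral_eq_lintegral_ofReal hint hnn]
  refine ENNReal.ofReal_le_ofReal ?_
  have : ∫ x in Ioc (e-m) e, (e - x) ^ (-α) = ∫ x in (e-m)..e, (e - x) ^ (-α) :=
    (intervalIntegral.integral_of_le (by linarith)).symm
  rw [this, intervalIntegral.integral_comp_sub_left (fun u => u ^ (-α)) e]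
  simp only [sub_self, sub_sub_cancel]
  rw [integral_rpow (Or.inl (by linarith : (-1:ℝ) < -α))]
  rw [Real.zero_rpow (by linarith : -α + 1 ≠ 0)]
  have : m ^ (-α + 1) = m ^ (1 - α) := by ring_nf
  rw [sub_zero, this]
  gcongr <;> linarith

/-- Kernel bound over an interval of length `q - p`. -/
lemma kernelBound (h0 : 0 < α) (h1 : α < 1) (p q c : ℝ) (hpq : p ≤ q) :
    ∫⁻ x in Ioc p q, ENNReal.ofReal (|x - c| ^ (-α))
      ≤ ENNReal.ofReal (2 * ((q - p) ^ (1-α) / (1-α))) := by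
  set L := q - p with hL
  have hL0 : 0 ≤ L := by simp [hL]; linarith
  have hsplit : Ioc p q = (Ioc p q ∩ Iic c) ∪ (Ioc p q ∩ Ioi c) := by
    ext x
    simp only [mem_union, mem_inter_iff, mem_Ioc, mem_Iic, mem_Ioi]
    constructor
    · intro hx
      rcases le_or_gt x c with h | h
      · exact Or.inl ⟨hx, h⟩
      · exact Or.inr ⟨hx, h⟩
    · rintro (⟨hx, _⟩ | ⟨hx, _⟩) <;> exact hx
  rw [hsplit]
  refine (lintegral_union_le _ _ _).trans ?_
  have hX : 0 ≤ L ^ (1-α) / (1-α) :=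
    div_nonneg (Real.rpow_nonneg hL0 _) (by linarith)
  have hleft : ∫⁻ x in Ioc p q ∩ Iic c, ENNReal.ofReal (|x - c| ^ (-α))
      ≤ ENNReal.ofReal (L ^ (1-α) / (1-α)) := by
    set E := min q c with hE
    have hsub : Ioc p q ∩ Iic c ⊆ Ioc (E - L) E := by
      rintro x ⟨⟨hx1, hx2⟩, hx3⟩
      constructor
      · have : E ≤ q := min_le_left _ _
        simp only [hL]; linarith
      · exact le_min hx2 hx3
    refine (lintegral_mono_set hsub).trans ?_
    have hcongr : ∫⁻ x in Ioc (E - L) E, ENNReal.ofReal (|x - c| ^ (-α))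
        = ∫⁻ x in Ioc (E - L) E, ENNReal.ofReal ((c - x) ^ (-α)) := by
      refine setLIntegral_congr_fun measurableSet_Ioc (fun x hx => ?_)
      have hxc : x ≤ c := le_trans hx.2 (min_le_right _ _)
      rw [abs_sub_comm, abs_of_nonneg (by linarith)]
    rw [hcongr]
    exact shiftLeft h0 h1 (min_le_right q c) hL0
  have hright : ∫⁻ x in Ioc p q ∩ Ioi c, ENNReal.ofReal (|x - c| ^ (-α))
      ≤ ENNReal.ofReal (L ^ (1-α) / (1-α)) := by
    set E := max p c with hE
    have hsub : Ioc p q ∩ Ioi c ⊆ Ioc E (E + L) := by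
      rintro x ⟨⟨hx1, hx2⟩, hx3⟩
      constructor
      · exact max_lt hx1 hx3
      · have : p ≤ E := le_max_left _ _
        simp only [hL]; linarith
    refine (lintegral_mono_set hsub).trans ?_
    have hcongr : ∫⁻ x in Ioc E (E + L), ENNReal.ofReal (|x - c| ^ (-α))
        = ∫⁻ x in Ioc E (E + L), ENNReal.ofReal ((x - c) ^ (-α)) := by
      refine setLIntegral_congr_fun measurableSet_Ioc (fun x hx => ?_)
      have hxc : c ≤ x := le_trans (le_max_right p c) hx.1.le
      rw [abs_of_nonneg (by linarith)]
    rw [hcongr]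
    exact shiftRight h0 h1 (le_max_right p c) hL0
  calc _ ≤ ENNReal.ofReal (L ^ (1-α) / (1-α)) + ENNReal.ofReal (L ^ (1-α) / (1-α)) :=
        add_le_add hleft hright
    _ = ENNReal.ofReal (2 * (L ^ (1-α) / (1-α))) := by
        rw [← ENNReal.ofReal_add hX hX]; ring_nf

lemma reduceForm (c1 c2 : ℝ≥0∞) (hc1 : c1 ≠ ⊤) (hc2 : c2 ≠ ⊤) (A1 B1 A2 B2 : ℝ)
    (k : ℝ → ℝ → ℝ≥0∞) :
    (∫⁻ r, ∫⁻ r', ((Icc A1 B1).indicator (fun _ => c1) r) *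
        ((Icc A2 B2).indicator (fun _ => c2) r') * k r r')
      = c1 * ∫⁻ r in Icc A1 B1, (c2 * ∫⁻ r' in Icc A2 B2, k r r') := by
  have hind1 : ∀ r, (Icc A1 B1).indicator (fun _ => c1) r ≠ ⊤ := by
    intro r; by_cases h : r ∈ Icc A1 B1 <;> simp [h, hc1]
  have inner : ∀ r, (∫⁻ r', ((Icc A1 B1).indicator (fun _ => c1) r) *
      ((Icc A2 B2).indicator (fun _ => c2) r') * k r r')
      = ((Icc A1 B1).indicator (fun _ => c1) r) * (c2 * ∫⁻ r' in Icc A2 B2, k r r') := by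
    intro r
    simp_rw [mul_assoc]
    rw [lintegral_const_mul' _ _ (hind1 r)]
    congr 1
    have h2 : ∀ r', (Icc A2 B2).indicator (fun _ => c2) r' * k r r'
        = (Icc A2 B2).indicator (fun r' => c2 * k r r') r' := by
      intro r'
      rw [Set.indicator_mul_left]
    simp_rw [h2]
    rw [lintegral_indicator measurableSet_Icc, lintegral_const_mul' _ _ hc2]
  simp_rw [inner]
  have h3 : ∀ r, ((Icc A1 B1).indicator (fun _ => c1) r) *
      (c2 * ∫⁻ r' in Icc A2 B2, k r r')
      = (Icc A1 B1).indicator (fun r => c1 * (c2 * ∫⁻ r' in Icc A2 B2, k r r')) r := by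
    intro r
    rw [Set.indicator_mul_left]
  simp_rw [h3]
  rw [lintegral_indicator measurableSet_Icc, lintegral_const_mul' _ _ hc1]

lemma outerMass {δ : ℝ} (hδ : 0 < δ) {A B : ℝ} (hAB : B - A = δ) {g : ℝ → ℝ≥0∞} {K : ℝ≥0∞}
    (hg : ∀ r ∈ Icc A B, g r ≤ K) :
    ENNReal.ofReal δ⁻¹ * ∫⁻ r in Icc A B, g r ≤ K := by
  calc ENNReal.ofReal δ⁻¹ * ∫⁻ r in Icc A B, g r
      ≤ ENNReal.ofReal δ⁻¹ * ∫⁻ _ in Icc A B, K :=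
        mul_le_mul_of_nonneg_left (setLIntegral_mono measurable_const hg) (by positivity)
    _ = ENNReal.ofReal δ⁻¹ * (K * ENNReal.ofReal δ) := by
        rw [setLIntegral_const, Real.volume_Icc, hAB]
    _ = K * (ENNReal.ofReal δ⁻¹ * ENNReal.ofReal δ) := by ring
    _ = K := by
        rw [← ENNReal.ofReal_mul (inv_nonneg.2 hδ.le), inv_mul_cancel₀ (ne_of_gt hδ),
          ENNReal.ofReal_one, mul_one]

lemma core (h0 : 0 < α) (h1 : α < 1) {δ' : ℝ} (hδ' : 0 < δ') {A B : ℝ} (hAB : B - A = δ')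
    (c : ℝ) :
    ENNReal.ofReal δ'⁻¹ * ∫⁻ x in Icc A B, ENNReal.ofReal (|x - c| ^ (-α))
      ≤ ENNReal.ofReal (2 * δ' ^ (-α) / (1-α)) := by
  have hAB' : A ≤ B := by linarith
  have hIcc : ∫⁻ x in Icc A B, ENNReal.ofReal (|x - c| ^ (-α))
      = ∫⁻ x in Ioc A B, ENNReal.ofReal (|x - c| ^ (-α)) :=
    (setLIntegral_congr (Ioc_ae_eq_Icc (a := A) (b := B))).symm
  rw [hIcc]
  calc ENNReal.ofReal δ'⁻¹ * ∫⁻ x in Ioc A B, ENNReal.ofReal (|x - c| ^ (-α))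
      ≤ ENNReal.ofReal δ'⁻¹ * ENNReal.ofReal (2 * ((B - A) ^ (1-α) / (1-α))) :=
        mul_le_mul_of_nonneg_left (kernelBound h0 h1 A B c hAB') (by positivity)
    _ = ENNReal.ofReal (δ'⁻¹ * (2 * (δ' ^ (1-α) / (1-α)))) := by
        rw [hAB, ← ENNReal.ofReal_mul (inv_nonneg.2 hδ'.le)]
    _ = ENNReal.ofReal (2 * δ' ^ (-α) / (1-α)) := by
        congr 1
        have hpow : δ'⁻¹ * δ' ^ (1-α) = δ' ^ (-α) := by
          rw [← Real.rpow_neg_one δ', ← Real.rpow_add hδ']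
          congr 1
          ring
        rw [← hpow]
        ring

lemma master (h0 : 0 < α) (h1 : α < 1) {δ δ' : ℝ} (hδ : 0 < δ) (hδ' : 0 < δ')
    {A1 B1 A2 B2 : ℝ} (hB1 : B1 - A1 = δ) (hB2 : B2 - A2 = δ') :
    (∫⁻ r, ∫⁻ r', ((Icc A1 B1).indicator (fun _ => ENNReal.ofReal δ⁻¹) r) *
        ((Icc A2 B2).indicator (fun _ => ENNReal.ofReal δ'⁻¹) r') *
        ENNReal.ofReal (|r - r'| ^ (-α)))
      ≤ ENNReal.ofReal (2 * δ' ^ (-α) / (1-α)) := by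
  rw [reduceForm _ _ ENNReal.ofReal_ne_top ENNReal.ofReal_ne_top]
  refine outerMass hδ hB1 (fun r _ => ?_)
  have hsymm : ∫⁻ r' in Icc A2 B2, ENNReal.ofReal (|r - r'| ^ (-α))
      = ∫⁻ r' in Icc A2 B2, ENNReal.ofReal (|r' - r| ^ (-α)) :=
    setLIntegral_congr_fun measurableSet_Icc (fun r' _ => by rw [abs_sub_comm])
  rw [hsymm]
  exact core h0 h1 hδ' hB2 r

lemma masterSep (h0 : 0 < α) (h1 : α < 1) {δ δ' : ℝ} (hδ : 0 < δ) (hδ' : 0 < δ')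
    {A1 B1 A2 B2 : ℝ} (hB1 : B1 - A1 = δ) (hB2 : B2 - A2 = δ') {b : ℝ} (hb : 0 < b)
    (hsep : ∀ r ∈ Icc A1 B1, ∀ r' ∈ Icc A2 B2, b ≤ |r - r'|) :
    (∫⁻ r, ∫⁻ r', ((Icc A1 B1).indicator (fun _ => ENNReal.ofReal δ⁻¹) r) *
        ((Icc A2 B2).indicator (fun _ => ENNReal.ofReal δ'⁻¹) r') *
        ENNReal.ofReal (|r - r'| ^ (-α)))
      ≤ ENNReal.ofReal (b ^ (-α)) := by
  rw [reduceForm _ _ ENNReal.ofReal_ne_top ENNReal.ofReal_ne_top]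
  refine outerMass hδ hB1 (fun r hr => ?_)
  refine outerMass hδ' hB2 (fun r' hr' => ?_)
  exact ENNReal.ofReal_le_ofReal
    (Real.rpow_le_rpow_of_nonpos hb (hsep r hr r' hr') (by linarith))

end Stmt0Aux

theorem stmt0 (α : ℝ) (hα : α ∈ Set.Ioo (0:ℝ) 1) :
    ∃ C > (0:ℝ), ∀ t > (0:ℝ), ∀ s ∈ Set.Icc (0:ℝ) t, ∀ s' ∈ Set.Icc (0:ℝ) t, s ≠ s' →
      ∀ δ > (0:ℝ), ∀ δ' > (0:ℝ),
      (∫ r in Set.Ioc (0:ℝ) t, ∫ r' in Set.Ioc (0:ℝ) t,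
          (Set.indicator (Set.Icc (0:ℝ) δ) (fun _ => δ⁻¹) (t - s - r)) *
          (Set.indicator (Set.Icc (0:ℝ) δ') (fun _ => δ'⁻¹) (t - s' - r')) *
          |r - r'| ^ (-α))
        ≤ C * |s - s'| ^ (-α) := by
  obtain ⟨hα0, hα1⟩ := hα
  refine ⟨2 ^ α + 2 * 4 ^ α / (1 - α), ?_, ?_⟩
  · have h2 : (0:ℝ) < 2 ^ α := Real.rpow_pos_of_pos (by norm_num) _
    have h4 : (0:ℝ) ≤ 4 ^ α := (Real.rpow_pos_of_pos (by norm_num) _).le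
    have : (0:ℝ) ≤ 2 * 4 ^ α / (1 - α) := div_nonneg (by positivity) (by linarith)
    linarith
  intro t ht s hs s' hs' hne δ hδ δ' hδ'
  set C : ℝ := 2 ^ α + 2 * 4 ^ α / (1 - α) with hC
  set h := |s - s'| with hhdef
  have hh0 : 0 < h := abs_pos.2 (sub_ne_zero.2 hne)
  set A1 := t - s - δ with hA1
  set B1 := t - s with hB1def
  set A2 := t - s' - δ' with hA2
  set B2 := t - s' with hB2def
  have hB1 : B1 - A1 = δ := by simp [hA1, hB1def]
  have hB2 : B2 - A2 = δ' := by simp [hA2, hB2def]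
  have hind1 : ∀ r : ℝ, (Icc (0:ℝ) δ).indicator (fun _ => δ⁻¹) (t - s - r)
      = (Icc A1 B1).indicator (fun _ => δ⁻¹) r := by
    intro r
    have hmem : (t - s - r ∈ Icc (0:ℝ) δ) ↔ (r ∈ Icc A1 B1) := by
      simp only [mem_Icc, hA1, hB1def]
      constructor <;> (intro hh; exact ⟨by linarith [hh.1, hh.2], by linarith [hh.1, hh.2]⟩)
    by_cases h' : r ∈ Icc A1 B1
    · rw [indicator_of_mem h', indicator_of_mem (hmem.2 h')]
    · rw [indicator_of_notMem h', indicator_of_notMem (fun hc => h' (hmem.1 hc))]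
  have hind2 : ∀ r' : ℝ, (Icc (0:ℝ) δ').indicator (fun _ => δ'⁻¹) (t - s' - r')
      = (Icc A2 B2).indicator (fun _ => δ'⁻¹) r' := by
    intro r'
    have hmem : (t - s' - r' ∈ Icc (0:ℝ) δ') ↔ (r' ∈ Icc A2 B2) := by
      simp only [mem_Icc, hA2, hB2def]
      constructor <;> (intro hh; exact ⟨by linarith [hh.1, hh.2], by linarith [hh.1, hh.2]⟩)
    by_cases h' : r' ∈ Icc A2 B2
    · rw [indicator_of_mem h', indicator_of_mem (hmem.2 h')]
    · rw [indicator_of_notMem h', indicator_of_notMem (fun hc => h' (hmem.1 hc))]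
  simp only [hB1def, hB2def]
  simp only [hind1, hind2]
  set F : ℝ → ℝ → ℝ := fun r r' => (Icc A1 B1).indicator (fun _ => δ⁻¹) r *
      (Icc A2 B2).indicator (fun _ => δ'⁻¹) r' * |r - r'| ^ (-α) with hF
  have hm1 : Measurable ((Icc A1 B1).indicator (fun _ => δ⁻¹)) :=
    measurable_const.indicator measurableSet_Icc
  have hm2 : Measurable ((Icc A2 B2).indicator (fun _ => δ'⁻¹)) :=
    measurable_const.indicator measurableSet_Icc
  have hmk : Measurable fun p : ℝ × ℝ => |p.1 - p.2| ^ (-α) := by fun_prop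
  have hFmeas : Measurable fun p : ℝ × ℝ => F p.1 p.2 :=
    ((hm1.comp measurable_fst).mul (hm2.comp measurable_snd)).mul hmk
  have hFnn : ∀ r r', 0 ≤ F r r' := fun r r' =>
    mul_nonneg (mul_nonneg (indicator_nonneg (fun _ _ => inv_nonneg.2 hδ.le) _)
      (indicator_nonneg (fun _ _ => inv_nonneg.2 hδ'.le) _))
      (Real.rpow_nonneg (abs_nonneg _) _)
  have hofF : ∀ r r', ENNReal.ofReal (F r r')
      = ((Icc A1 B1).indicator (fun _ => ENNReal.ofReal δ⁻¹) r) *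
        ((Icc A2 B2).indicator (fun _ => ENNReal.ofReal δ'⁻¹) r') *
        ENNReal.ofReal (|r - r'| ^ (-α)) := by
    intro r r'
    rw [hF]
    rw [ENNReal.ofReal_mul (mul_nonneg (indicator_nonneg (fun _ _ => inv_nonneg.2 hδ.le) _)
      (indicator_nonneg (fun _ _ => inv_nonneg.2 hδ'.le) _)),
      ENNReal.ofReal_mul (indicator_nonneg (fun _ _ => inv_nonneg.2 hδ.le) _)]
    congr 1
    congr 1
    · by_cases hr : r ∈ Icc A1 B1 <;> simp [hr]
    · by_cases hr' : r' ∈ Icc A2 B2 <;> simp [hr']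
  -- main lintegral bound
  have hJ : (∫⁻ r, ∫⁻ r', ENNReal.ofReal (F r r')) ≤ ENNReal.ofReal (C * h ^ (-α)) := by
    simp_rw [hofF]
    have hCh : 0 ≤ h ^ (-α) := Real.rpow_nonneg hh0.le _
    have h4pos : (0:ℝ) < 4 ^ α := Real.rpow_pos_of_pos (by norm_num) _
    have h2pos : (0:ℝ) < 2 ^ α := Real.rpow_pos_of_pos (by norm_num) _
    have hBB : |B1 - B2| = h := by
      rw [hB1def, hB2def, hhdef, show (t - s) - (t - s') = -(s - s') by ring, abs_neg]
    rcases le_or_gt (δ + δ') (h / 2) with hcase | hcase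
    · -- separated case
      have hsep : ∀ r ∈ Icc A1 B1, ∀ r' ∈ Icc A2 B2, h / 2 ≤ |r - r'| := by
        intro r hr r' hr'
        have h1r := hr.1; have h2r := hr.2
        have h1r' := hr'.1; have h2r' := hr'.2
        have habs : |(B1 - r) - (B2 - r')| ≤ δ + δ' := by
          rw [abs_le]
          constructor
          · simp only [hA1, hB1def, hA2, hB2def] at *
            linarith
          · simp only [hA1, hB1def, hA2, hB2def] at *
            linarith
        have h2 := abs_sub_abs_le_abs_sub (B1 - B2) ((B1 - r) - (B2 - r'))
        have h3 : (B1 - B2) - ((B1 - r) - (B2 - r')) = r - r' := by ring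
        rw [h3, hBB] at h2
        linarith
      refine (Stmt0Aux.masterSep hα0 hα1 hδ hδ' hB1 hB2 (by linarith) hsep).trans ?_
      refine ENNReal.ofReal_le_ofReal ?_
      have heq : (h / 2) ^ (-α) = h ^ (-α) * 2 ^ α := by
        rw [show h / 2 = h * 2⁻¹ by ring, Real.mul_rpow hh0.le (by norm_num),
          Real.inv_rpow (by norm_num : (0:ℝ) ≤ 2), ← Real.rpow_neg (by norm_num : (0:ℝ) ≤ 2),
          neg_neg]
      rw [heq, hC]
      have : (0:ℝ) ≤ 2 * 4 ^ α / (1 - α) := div_nonneg (by positivity) (by linarith)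
      nlinarith
    · -- overlapping case
      have hquarter : (0:ℝ) < h / 4 := by linarith
      have hkey : ∀ d : ℝ, h / 4 < d →
          2 * d ^ (-α) / (1 - α) ≤ C * h ^ (-α) := by
        intro d hd
        have hd0 : 0 < d := lt_trans hquarter hd
        have hle : d ^ (-α) ≤ (h / 4) ^ (-α) :=
          Real.rpow_le_rpow_of_nonpos hquarter hd.le (by linarith)
        have heq : (h / 4) ^ (-α) = h ^ (-α) * 4 ^ α := by
          rw [show h / 4 = h * 4⁻¹ by ring, Real.mul_rpow hh0.le (by norm_num),
            Real.inv_rpow (by norm_num : (0:ℝ) ≤ 4), ← Real.rpow_neg (by norm_num : (0:ℝ) ≤ 4),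
            neg_neg]
        rw [heq] at hle
        have h1α : (0:ℝ) < 1 - α := by linarith
        calc 2 * d ^ (-α) / (1 - α) ≤ 2 * (h ^ (-α) * 4 ^ α) / (1 - α) := by gcongr
          _ = 2 * 4 ^ α / (1 - α) * h ^ (-α) := by ring
          _ ≤ C * h ^ (-α) := by
              rw [hC]
              nlinarith [mul_nonneg h2pos.le hCh]
      rcases le_total δ δ' with hdd | hdd
      · have hd' : h / 4 < δ' := by linarith
        refine (Stmt0Aux.master hα0 hα1 hδ hδ' hB1 hB2).trans ?_
        exact ENNReal.ofReal_le_ofReal (hkey δ' hd')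
      · have hd : h / 4 < δ := by linarith
        have hswap : (∫⁻ r, ∫⁻ r', ((Icc A1 B1).indicator (fun _ => ENNReal.ofReal δ⁻¹) r) *
            ((Icc A2 B2).indicator (fun _ => ENNReal.ofReal δ'⁻¹) r') *
            ENNReal.ofReal (|r - r'| ^ (-α)))
            = ∫⁻ r', ∫⁻ r, ((Icc A1 B1).indicator (fun _ => ENNReal.ofReal δ⁻¹) r) *
            ((Icc A2 B2).indicator (fun _ => ENNReal.ofReal δ'⁻¹) r') *
            ENNReal.ofReal (|r - r'| ^ (-α)) := by
          refine lintegral_lintegral_swap ?_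
          have : Measurable fun p : ℝ × ℝ =>
              ((Icc A1 B1).indicator (fun _ => ENNReal.ofReal δ⁻¹) p.1) *
              ((Icc A2 B2).indicator (fun _ => ENNReal.ofReal δ'⁻¹) p.2) *
              ENNReal.ofReal (|p.1 - p.2| ^ (-α)) := by
            refine Measurable.mul (Measurable.mul ?_ ?_) ?_
            · exact (measurable_const.indicator measurableSet_Icc).comp measurable_fst
            · exact (measurable_const.indicator measurableSet_Icc).comp measurable_snd
            · exact hmk.ennreal_ofReal
          exact this.aemeasurable
        rw [hswap]
        have hcomm : ∀ r r' : ℝ,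
            ((Icc A1 B1).indicator (fun _ => ENNReal.ofReal δ⁻¹) r) *
            ((Icc A2 B2).indicator (fun _ => ENNReal.ofReal δ'⁻¹) r') *
            ENNReal.ofReal (|r - r'| ^ (-α))
            = ((Icc A2 B2).indicator (fun _ => ENNReal.ofReal δ'⁻¹) r') *
            ((Icc A1 B1).indicator (fun _ => ENNReal.ofReal δ⁻¹) r) *
            ENNReal.ofReal (|r' - r| ^ (-α)) := by
          intro r r'
          rw [abs_sub_comm]
          ring
        simp_rw [hcomm]
        refine (Stmt0Aux.master hα0 hα1 hδ' hδ hB2 hB1).trans ?_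
        exact ENNReal.ofReal_le_ofReal (hkey δ hd)
  -- from Bochner to lintegral
  have step1 : ∫ r in Ioc (0:ℝ) t, (∫ r' in Ioc (0:ℝ) t, F r r')
      = (∫⁻ r in Ioc (0:ℝ) t, ENNReal.ofReal (∫ r' in Ioc (0:ℝ) t, F r r')).toReal := by
    refine integral_eq_lintegral_of_nonneg_ae (ae_of_all _ fun r =>
      integral_nonneg fun r' => hFnn r r') ?_
    exact (StronglyMeasurable.integral_prod_right (f := F)
      hFmeas.stronglyMeasurable).aestronglyMeasurable
  have step2 : (∫⁻ r in Ioc (0:ℝ) t, ENNReal.ofReal (∫ r' in Ioc (0:ℝ) t, F r r'))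
      ≤ ∫⁻ r in Ioc (0:ℝ) t, ∫⁻ r' in Ioc (0:ℝ) t, ENNReal.ofReal (F r r') := by
    refine lintegral_mono fun r => ?_
    rw [integral_eq_lintegral_of_nonneg_ae (ae_of_all _ fun r' => hFnn r r')
      ((hFmeas.comp (measurable_const.prodMk measurable_id)).aestronglyMeasurable)]
    exact ENNReal.ofReal_toReal_le
  have step3 : (∫⁻ r in Ioc (0:ℝ) t, ∫⁻ r' in Ioc (0:ℝ) t, ENNReal.ofReal (F r r'))
      ≤ ∫⁻ r, ∫⁻ r', ENNReal.ofReal (F r r') := by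
    refine le_trans (setLIntegral_mono' measurableSet_Ioc fun r _ => ?_)
      (setLIntegral_le_lintegral _ _)
    exact setLIntegral_le_lintegral _ _
  calc ∫ r in Ioc (0:ℝ) t, (∫ r' in Ioc (0:ℝ) t, F r r')
      = (∫⁻ r in Ioc (0:ℝ) t, ENNReal.ofReal (∫ r' in Ioc (0:ℝ) t, F r r')).toReal := step1
    _ ≤ (ENNReal.ofReal (C * h ^ (-α))).toReal :=
        ENNReal.toReal_mono ENNReal.ofReal_ne_top (le_trans step2 (le_trans step3 hJ))
    _ = C * h ^ (-α) := by
        refine ENNReal.toReal_ofReal ?_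
        have h2pos : (0:ℝ) < 2 ^ α := Real.rpow_pos_of_pos (by norm_num) _
        have : (0:ℝ) ≤ 2 * 4 ^ α / (1 - α) := div_nonneg (by positivity) (by linarith)
        refine mul_nonneg (by rw [hC]; linarith) (Real.rpow_nonneg hh0.le _)
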